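/- Wasserstein separation from a rotating measure: let h ∈ P(S²) be a probability density on the sphere with ∫_{S²} ξ₂ h(ξ) dξ > 0, let M be the skew-symmetric matrix with Mv = e₃ ∧ v, and c̄ > 0. Define f(t) = (uniform)⊗h and f̄(t) = (uniform)⊗(h∘e^{−(c̄/2)Mt}) on 𝕋×S². Then there exist c, T > 0 such that W₁(f(t), f̄(t)) ≥ ct for all t ∈ [0,T]. In fact, g(t) := ∫_{S²}(ξ₁ − (e^{(c̄/2)Mt}ξ)₁) h(ξ)dξ is a lower bound for W₁(f(t),f̄(t)) via the 1-Lipschitz test function φ(x,ξ) = ξ₁, and g(0) = 0, g'(0) = (c̄/2)∫ ξ₂ h dξ > 0. -/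

import Mathlib

open MeasureTheory Real Set
open scoped BigOperators ENNReal

noncomputable section

abbrev E3 := EuclideanSpace ℝ (Fin 3)

/-- The torus `𝕋 = (ℝ/ℤ)³`. -/
abbrev T3 := Fin 3 → AddCircle (1 : ℝ)

/-- Rotation by angle `s` about `e₃`, i.e. `e^{sM}` for `M = [[0,−1,0],[1,0,0],[0,0,0]]`. -/
def rot (s : ℝ) (ξ : E3) : E3 :=
  (WithLp.equiv 2 (Fin 3 → ℝ)).symm
    ![ξ 0 * Real.cos s - ξ 1 * Real.sin s, ξ 0 * Real.sin s + ξ 1 * Real.cos s, ξ 2]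

/-- Surface measure on the unit sphere `S² ⊂ ℝ³`. -/
def sphMeas : Measure E3 := μH[2].restrict (Metric.sphere (0 : E3) 1)

/-- The 1-Wasserstein distance via Kantorovich duality. -/
def W1 {X : Type*} [PseudoMetricSpace X] [MeasurableSpace X] (μ ν : Measure X) : ℝ :=
  sSup {r | ∃ φ : X → ℝ, LipschitzWith 1 φ ∧ r = (∫ x, φ x ∂μ) - ∫ x, φ x ∂ν}

/-- The measure on `𝕋 × S²` which is uniform in space with orientational density `h`. -/
def prodMeas (h : E3 → ℝ) : Measure (T3 × E3) :=
  (volume : Measure T3).prod (sphMeas.withDensity fun ξ => ENNReal.ofReal (h ξ))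

@[simp] lemma rot_apply0 (s : ℝ) (ξ : E3) : rot s ξ 0 = ξ 0 * Real.cos s - ξ 1 * Real.sin s := rfl
@[simp] lemma rot_apply1 (s : ℝ) (ξ : E3) : rot s ξ 1 = ξ 0 * Real.sin s + ξ 1 * Real.cos s := rfl
@[simp] lemma rot_apply2 (s : ℝ) (ξ : E3) : rot s ξ 2 = ξ 2 := rfl

lemma rot_rot (s : ℝ) (ξ : E3) : rot (-s) (rot s ξ) = ξ := by
  have hsc := Real.sin_sq_add_cos_sq s
  ext i
  fin_cases i
  · simp; linear_combination ξ 0 * hsc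
  · simp; linear_combination ξ 1 * hsc
  · simp

lemma dist_rot (s : ℝ) (ξ η : E3) : dist (rot s ξ) (rot s η) = dist ξ η := by
  have hsc := Real.sin_sq_add_cos_sq s
  rw [EuclideanSpace.dist_eq, EuclideanSpace.dist_eq]
  congr 1
  rw [Fin.sum_univ_three, Fin.sum_univ_three]
  simp [Real.dist_eq, sq_abs]
  nlinarith [hsc]

def rotE (s : ℝ) : E3 ≃ᵢ E3 where
  toFun := rot s
  invFun := rot (-s)
  left_inv := rot_rot s
  right_inv := fun ξ => by have := rot_rot (-s) ξ; rwa [neg_neg] at this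
  isometry_toFun := fun ξ η => by simp [edist_dist, dist_rot]

lemma rot_zero (s : ℝ) : rot s (0 : E3) = 0 := by
  ext i; fin_cases i <;> simp <;> rfl

lemma rot_continuous (s : ℝ) : Continuous (rot s) := (rotE s).continuous

lemma norm_rot (s : ℝ) (ξ : E3) : ‖rot s ξ‖ = ‖ξ‖ := by
  have := dist_rot s ξ 0
  rwa [rot_zero, dist_zero_right, dist_zero_right] at this

lemma rot_preimage_sphere (s : ℝ) :
    rot s ⁻¹' (Metric.sphere (0 : E3) 1) = Metric.sphere (0 : E3) 1 := by
  ext ξ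
  simp [mem_sphere_zero_iff_norm, norm_rot]

lemma map_rot (s : ℝ) : Measure.map (rot s) sphMeas = sphMeas := by
  have hs : MeasurableSet (Metric.sphere (0 : E3) 1) := Metric.isClosed_sphere.measurableSet
  have hm : Measurable (rot s) := (rot_continuous s).measurable
  calc Measure.map (rot s) sphMeas
      = Measure.map (rot s) (μH[2].restrict (rot s ⁻¹' (Metric.sphere (0 : E3) 1))) := by
        rw [rot_preimage_sphere]; rfl
    _ = (Measure.map (rot s) μH[2]).restrict (Metric.sphere (0 : E3) 1) :=
        (Measure.restrict_map hm hs).symm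
    _ = sphMeas := by
        have h2 : Measure.map (rotE s) μH[2] = μH[2] := (rotE s).map_hausdorffMeasure 2
        rw [show rot s = ⇑(rotE s) from rfl, h2]; rfl

lemma lint_rot (s : ℝ) (f : E3 → ℝ≥0∞) (hf : Measurable f) :
    ∫⁻ ξ, f (rot s ξ) ∂sphMeas = ∫⁻ ξ, f ξ ∂sphMeas := by
  conv_rhs => rw [← map_rot s]
  rw [lintegral_map hf (rot_continuous s).measurable]

lemma int_rot (s : ℝ) (f : E3 → ℝ) (hf : AEStronglyMeasurable f sphMeas) :
    ∫ ξ, f (rot s ξ) ∂sphMeas = ∫ ξ, f ξ ∂sphMeas := by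
  conv_rhs => rw [← map_rot s]
  rw [integral_map (rot_continuous s).measurable.aemeasurable (by rwa [map_rot])]

lemma abs_coord_le (ξ : E3) (i : Fin 3) : |ξ i| ≤ ‖ξ‖ := by
  rw [EuclideanSpace.norm_eq, ← Real.sqrt_sq_eq_abs]
  apply Real.sqrt_le_sqrt
  rw [Fin.sum_univ_three]
  fin_cases i <;> simp <;> nlinarith [sq_nonneg (ξ 0), sq_nonneg (ξ 1), sq_nonneg (ξ 2)]

lemma volume_T3_univ : (volume : Measure T3) Set.univ = 1 := by
  rw [MeasureTheory.volume_pi, Measure.pi_univ]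
  simp [AddCircle.measure_univ]

lemma sphereMeasurable : MeasurableSet (Metric.sphere (0 : E3) 1) :=
  Metric.isClosed_sphere.measurableSet

section
variable (h' : E3 → ℝ) (hc' : Continuous h')
  (hm' : ∫⁻ ξ, ENNReal.ofReal (h' ξ) ∂sphMeas = 1)

include hm' in
lemma withDensity_mass :
    (sphMeas.withDensity fun ξ => ENNReal.ofReal (h' ξ)) Set.univ = 1 := by
  rw [withDensity_apply _ MeasurableSet.univ, Measure.restrict_univ]
  exact hm'

include hm' in
lemma isFinite_withDensity :
    IsFiniteMeasure (sphMeas.withDensity fun ξ => ENNReal.ofReal (h' ξ)) := by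
  constructor
  rw [withDensity_mass h' hm']
  exact ENNReal.one_lt_top

include hm' in
lemma prodMeas_prob : IsProbabilityMeasure (prodMeas h') := by
  haveI := isFinite_withDensity h' hm'
  constructor
  rw [prodMeas, ← Set.univ_prod_univ, Measure.prod_prod, volume_T3_univ,
    withDensity_mass h' hm', one_mul]

lemma withDensity_sphere_compl :
    (sphMeas.withDensity fun ξ => ENNReal.ofReal (h' ξ)) (Metric.sphere (0:E3) 1)ᶜ = 0 := by
  rw [withDensity_apply _ sphereMeasurable.compl, sphMeas,
    Measure.restrict_restrict sphereMeasurable.compl, Set.compl_inter_self,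
    Measure.restrict_empty, lintegral_zero_measure]

include hm' in
lemma ae_snd_sphere :
    ∀ᵐ z ∂(prodMeas h'), z.2 ∈ Metric.sphere (0:E3) 1 := by
  haveI := isFinite_withDensity h' hm'
  rw [ae_iff]
  have hset : {z : T3 × E3 | ¬ z.2 ∈ Metric.sphere (0:E3) 1}
      = Set.univ ×ˢ (Metric.sphere (0:E3) 1)ᶜ := by
    ext ⟨a, b⟩; simp
  rw [prodMeas, hset, Measure.prod_prod, withDensity_sphere_compl h', mul_zero]

include hc' hm' in
lemma integral_snd_prodMeas (hnn' : ∀ ξ, 0 ≤ h' ξ) (f : E3 → ℝ) (hf : Continuous f) :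
    ∫ z, f z.2 ∂(prodMeas h') = ∫ ξ, f ξ * h' ξ ∂sphMeas := by
  haveI := isFinite_withDensity h' hm'
  rw [prodMeas]
  rw [← integral_map measurable_snd.aemeasurable
    (hf.aestronglyMeasurable (μ := Measure.map Prod.snd _)),
    Measure.map_snd_prod, integral_smul_measure, volume_T3_univ, ENNReal.toReal_one, one_smul]
  have heq : (fun ξ => ENNReal.ofReal (h' ξ))
      = fun ξ => ((fun ξ => (h' ξ).toNNReal) ξ : ℝ≥0∞) := rfl
  rw [heq, integral_withDensity_eq_integral_smul (hc'.measurable.real_toNNReal) f]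
  congr 1
  funext ξ
  rw [NNReal.smul_def, smul_eq_mul, Real.coe_toNNReal _ (hnn' ξ), mul_comm]

end

lemma lip_coord (i : Fin 3) : LipschitzWith 1 (fun ξ : E3 => ξ i) := by
  apply LipschitzWith.of_dist_le_mul
  intro ξ η
  rw [NNReal.coe_one, one_mul, EuclideanSpace.dist_eq, Fin.sum_univ_three, Real.dist_eq,
    ← Real.sqrt_sq_eq_abs]
  apply Real.sqrt_le_sqrt
  have h0 := sq_nonneg (dist (ξ 0) (η 0))
  have h1 := sq_nonneg (dist (ξ 1) (η 1))
  have h2 := sq_nonneg (dist (ξ 2) (η 2))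
  fin_cases i <;> simp [Real.dist_eq, sq_abs] at * <;> nlinarith

def zext : T3 × E3 := ((0 : T3), EuclideanSpace.single (0 : Fin 3) (1:ℝ))

lemma integral_lip_bound {μ : Measure (T3 × E3)} [IsProbabilityMeasure μ]
    (hae : ∀ᵐ z ∂μ, z.2 ∈ Metric.sphere (0:E3) 1) {φ : T3 × E3 → ℝ} (hφ : LipschitzWith 1 φ)
    {C : ℝ} (hC : ∀ x : T3, dist x (0 : T3) ≤ C) :
    |(∫ z, φ z ∂μ) - φ zext| ≤ max C 2 := by
  have hz₀ : ‖(zext).2‖ = 1 := by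
    simp [zext, EuclideanSpace.norm_single]
  have hb : ∀ᵐ z ∂μ, |φ z - φ zext| ≤ max C 2 := by
    filter_upwards [hae] with z hz
    have h1 := hφ.dist_le_mul z zext
    rw [NNReal.coe_one, one_mul, Real.dist_eq, Prod.dist_eq] at h1
    have h2 : dist z.2 zext.2 ≤ 2 := by
      calc dist z.2 zext.2 ≤ ‖z.2‖ + ‖zext.2‖ := dist_le_norm_add_norm _ _
        _ ≤ 2 := by rw [hz₀, mem_sphere_zero_iff_norm.1 hz]; norm_num
    calc |φ z - φ zext| ≤ max (dist z.1 zext.1) (dist z.2 zext.2) := h1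
      _ ≤ max C 2 := max_le_max (hC z.1) h2
  have hint : Integrable φ μ := by
    refine (integrable_const (|φ zext| + max C 2)).mono'
      hφ.continuous.aestronglyMeasurable ?_
    filter_upwards [hb] with z hz
    rw [Real.norm_eq_abs]
    calc |φ z| = |φ zext + (φ z - φ zext)| := by ring_nf
      _ ≤ |φ zext| + |φ z - φ zext| := abs_add_le _ _
      _ ≤ |φ zext| + max C 2 := by linarith
  have heq : (∫ z, φ z ∂μ) - φ zext = ∫ z, (φ z - φ zext) ∂μ := by
    rw [integral_sub hint (integrable_const _), integral_const, probReal_univ,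
      one_smul]
  rw [heq, ← Real.norm_eq_abs]
  have := norm_integral_le_of_norm_le_const (f := fun z => φ z - φ zext) (C := max C 2)
    (by filter_upwards [hb] with z hz; rwa [Real.norm_eq_abs])
  rwa [probReal_univ, mul_one] at this

lemma sphInt_eq (f : E3 → ℝ) :
    ∫ ξ in Metric.sphere (0:E3) 1, f ξ ∂μH[2] = ∫ ξ, f ξ ∂sphMeas := rfl

lemma trig_key (A B : ℝ) (hB : 0 < B) (s : ℝ) (hs : 0 ≤ s) (hs1 : s ≤ 1)
    (hs2 : s * (|A| + 1) ≤ B / 2) :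
    B / 4 * s ≤ (1 - Real.cos s) * A + Real.sin s * B := by
  rcases eq_or_lt_of_le hs with rfl | hs'
  · simp
  have hsin : s - s ^ 3 / 4 < Real.sin s := by
    have := Real.sin_gt_sub_cube hs'; nlinarith [pow_pos hs' 3]
  have hcos : 1 - Real.cos s ≤ s ^ 2 / 2 := by
    have h2 : Real.cos s = 2 * Real.cos (s / 2) ^ 2 - 1 := by
      have := Real.cos_two_mul (s / 2)
      rwa [show 2 * (s / 2) = s by ring] at this
    have h3 := Real.sin_sq_add_cos_sq (s / 2)
    have h4 : Real.sin (s / 2) ≤ s / 2 := Real.sin_le (by linarith)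
    have h5 : 0 ≤ Real.sin (s / 2) := Real.sin_nonneg_of_nonneg_of_le_pi (by linarith)
      (by nlinarith [Real.pi_gt_three])
    nlinarith
  have hcos0 : 0 ≤ 1 - Real.cos s := by nlinarith [Real.cos_le_one s]
  have hAbound : s ^ 2 / 2 * (-|A|) ≤ (1 - Real.cos s) * A := by
    calc s ^ 2 / 2 * (-|A|) ≤ (1 - Real.cos s) * (-|A|) :=
          mul_le_mul_of_nonpos_right hcos (by simp [abs_nonneg])
      _ ≤ (1 - Real.cos s) * A := mul_le_mul_of_nonneg_left (neg_abs_le A) hcos0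
  have hBbound : (s - s ^ 3 / 4) * B ≤ Real.sin s * B :=
    mul_le_mul_of_nonneg_right hsin.le hB.le
  have hs3 : s ^ 3 ≤ s := by nlinarith
  have hv2 : s ^ 3 * B ≤ s * B := mul_le_mul_of_nonneg_right hs3 hB.le
  have hsA : s * |A| ≤ B / 2 := by nlinarith [abs_nonneg A]
  have hv1 : s ^ 2 * |A| ≤ s * (B / 2) := by nlinarith [abs_nonneg A, mul_le_mul_of_nonneg_left hsA hs]
  have hsB : 0 ≤ s * B := mul_nonneg hs hB.le
  nlinarith [hAbound, hBbound, hv1, hv2, hsB]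

/-- for `f(t) = uniform ⊗ h` and `f̄(t) = uniform ⊗ (h ∘ e^{−(c̄/2)Mt})`,
the quantity `g(t) = ∫ (ξ₁ − (e^{(c̄/2)Mt}ξ)₁) h dξ` is a lower bound for
`W₁(f(t), f̄(t))`, and there are `c, T > 0` with `W₁(f(t), f̄(t)) ≥ ct` on `[0,T]`. -/
theorem stmt17 (cbar : ℝ) (hcbar : 0 < cbar) (h : E3 → ℝ) (hcont : Continuous h)
    (hnonneg : ∀ ξ, 0 ≤ h ξ)
    (hprob : ∫ ξ in Metric.sphere (0 : E3) 1, h ξ ∂μH[2] = 1)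
    (hmom : 0 < ∫ ξ in Metric.sphere (0 : E3) 1, ξ 1 * h ξ ∂μH[2]) :
    (∀ t : ℝ, 0 ≤ t →
      (∫ ξ in Metric.sphere (0 : E3) 1, (ξ 0 - rot (cbar / 2 * t) ξ 0) * h ξ ∂μH[2])
        ≤ W1 (prodMeas h) (prodMeas fun ξ => h (rot (-(cbar / 2) * t) ξ))) ∧
    ∃ c > (0:ℝ), ∃ T > (0:ℝ), ∀ t ∈ Icc (0:ℝ) T,
      c * t ≤ W1 (prodMeas h) (prodMeas fun ξ => h (rot (-(cbar / 2) * t) ξ)) := by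
  -- basic integrability and mass facts
  have hprob' : ∫ ξ, h ξ ∂sphMeas = 1 := hprob
  have hInt : Integrable h sphMeas := by
    by_contra hni
    rw [integral_undef hni] at hprob'
    norm_num at hprob'
  have hm1 : ∫⁻ ξ, ENNReal.ofReal (h ξ) ∂sphMeas = 1 := by
    rw [← ofReal_integral_eq_lintegral_ofReal hInt
      (Filter.Eventually.of_forall hnonneg), hprob', ENNReal.ofReal_one]
  have hmassrot : ∀ s : ℝ, ∫⁻ ξ, ENNReal.ofReal (h (rot s ξ)) ∂sphMeas = 1 := by
    intro s
    rw [lint_rot s (fun ξ => ENNReal.ofReal (h ξ))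
      (ENNReal.measurable_ofReal.comp hcont.measurable)]
    exact hm1
  have haesph : ∀ᵐ ξ ∂sphMeas, ξ ∈ Metric.sphere (0 : E3) 1 :=
    ae_restrict_mem sphereMeasurable
  have hInt0 : Integrable (fun ξ => ξ 0 * h ξ) sphMeas := by
    refine hInt.mono' (((lip_coord 0).continuous.mul hcont).aestronglyMeasurable) ?_
    filter_upwards [haesph] with ξ hξ
    rw [Real.norm_eq_abs, abs_mul, abs_of_nonneg (hnonneg ξ)]
    calc |ξ 0| * h ξ ≤ ‖ξ‖ * h ξ := by
          apply mul_le_mul_of_nonneg_right (abs_coord_le ξ 0) (hnonneg ξ)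
      _ = h ξ := by rw [mem_sphere_zero_iff_norm.1 hξ, one_mul]
  have hInt1 : Integrable (fun ξ => ξ 1 * h ξ) sphMeas := by
    refine hInt.mono' (((lip_coord 1).continuous.mul hcont).aestronglyMeasurable) ?_
    filter_upwards [haesph] with ξ hξ
    rw [Real.norm_eq_abs, abs_mul, abs_of_nonneg (hnonneg ξ)]
    calc |ξ 1| * h ξ ≤ ‖ξ‖ * h ξ := by
          apply mul_le_mul_of_nonneg_right (abs_coord_le ξ 1) (hnonneg ξ)
      _ = h ξ := by rw [mem_sphere_zero_iff_norm.1 hξ, one_mul]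
  have hIntRot : ∀ s : ℝ, Integrable (fun ξ => rot s ξ 0 * h ξ) sphMeas := by
    intro s
    refine hInt.mono' ((((lip_coord 0).continuous.comp
      (rot_continuous s)).mul hcont).aestronglyMeasurable) ?_
    filter_upwards [haesph] with ξ hξ
    rw [Real.norm_eq_abs, abs_mul, abs_of_nonneg (hnonneg ξ)]
    calc |rot s ξ 0| * h ξ ≤ ‖rot s ξ‖ * h ξ := by
          apply mul_le_mul_of_nonneg_right (abs_coord_le _ 0) (hnonneg ξ)
      _ = h ξ := by rw [norm_rot, mem_sphere_zero_iff_norm.1 hξ, one_mul]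
  -- the Lipschitz test function
  have hlipφ : LipschitzWith 1 (fun z : T3 × E3 => z.2 0) := by
    have := (lip_coord 0).comp (LipschitzWith.prod_snd (α := T3) (β := E3))
    rwa [mul_one] at this
  -- the main lower bound, part 1
  have hpart1 : ∀ t : ℝ,
      (∫ ξ in Metric.sphere (0 : E3) 1, (ξ 0 - rot (cbar / 2 * t) ξ 0) * h ξ ∂μH[2])
        ≤ W1 (prodMeas h) (prodMeas fun ξ => h (rot (-(cbar / 2) * t) ξ)) := by
    intro t
    haveI hPμ : IsProbabilityMeasure (prodMeas h) := prodMeas_prob h hm1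
    haveI hPν : IsProbabilityMeasure (prodMeas fun ξ => h (rot (-(cbar / 2) * t) ξ)) :=
      prodMeas_prob _ (hmassrot _)
    -- value of the integrals of the test function
    have I1 : ∫ z, z.2 0 ∂(prodMeas h) = ∫ ξ, ξ 0 * h ξ ∂sphMeas :=
      integral_snd_prodMeas h hcont hm1 hnonneg (fun ξ => ξ 0) (lip_coord 0).continuous
    have I2 : ∫ z, z.2 0 ∂(prodMeas fun ξ => h (rot (-(cbar / 2) * t) ξ))
        = ∫ ξ, rot (cbar / 2 * t) ξ 0 * h ξ ∂sphMeas := by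
      rw [integral_snd_prodMeas (fun ξ => h (rot (-(cbar / 2) * t) ξ))
        (by exact hcont.comp (rot_continuous _)) (hmassrot _)
        (fun ξ => hnonneg _) (fun ξ => ξ 0) (lip_coord 0).continuous]
      have hrr : ∀ ξ : E3, rot (-(cbar / 2) * t) (rot (cbar / 2 * t) ξ) = ξ := by
        intro ξ
        rw [neg_mul]
        exact rot_rot _ ξ
      have := int_rot (cbar / 2 * t) (fun ξ => ξ 0 * h (rot (-(cbar / 2) * t) ξ))
        (((lip_coord 0).continuous.mul
          (hcont.comp (rot_continuous _))).aestronglyMeasurable)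
      simp only [hrr] at this
      exact this.symm
    -- the candidate value is in the dual set
    have hval : (∫ ξ in Metric.sphere (0 : E3) 1, (ξ 0 - rot (cbar / 2 * t) ξ 0) * h ξ ∂μH[2])
        = (∫ z, z.2 0 ∂(prodMeas h))
          - ∫ z, z.2 0 ∂(prodMeas fun ξ => h (rot (-(cbar / 2) * t) ξ)) := by
      rw [I1, I2]
      rw [show (∫ ξ in Metric.sphere (0 : E3) 1, (ξ 0 - rot (cbar / 2 * t) ξ 0) * h ξ ∂μH[2])
          = ∫ ξ, (ξ 0 * h ξ - rot (cbar / 2 * t) ξ 0 * h ξ) ∂sphMeas from by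
        apply integral_congr_ae
        filter_upwards with ξ
        ring]
      exact integral_sub hInt0 (hIntRot _)
    have hmem : (∫ ξ in Metric.sphere (0 : E3) 1, (ξ 0 - rot (cbar / 2 * t) ξ 0) * h ξ ∂μH[2])
        ∈ {r | ∃ φ : T3 × E3 → ℝ, LipschitzWith 1 φ ∧
            r = (∫ z, φ z ∂(prodMeas h))
              - ∫ z, φ z ∂(prodMeas fun ξ => h (rot (-(cbar / 2) * t) ξ))} :=
      ⟨fun z => z.2 0, hlipφ, hval⟩
    -- boundedness of the dual set
    obtain ⟨CT, hCT'⟩ := (isCompact_univ (X := T3)).isBounded.subset_closedBall (0 : T3)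
    have hCT : ∀ x : T3, dist x (0 : T3) ≤ CT := fun x =>
      Metric.mem_closedBall.1 (hCT' (Set.mem_univ x))
    have hbdd : BddAbove {r | ∃ φ : T3 × E3 → ℝ, LipschitzWith 1 φ ∧
        r = (∫ z, φ z ∂(prodMeas h))
          - ∫ z, φ z ∂(prodMeas fun ξ => h (rot (-(cbar / 2) * t) ξ))} := by
      refine ⟨2 * max CT 2, ?_⟩
      rintro r ⟨φ, hφ, rfl⟩
      have hb1 := integral_lip_bound (ae_snd_sphere h hm1) hφ hCT
      have hb2 := integral_lip_bound
        (ae_snd_sphere (fun ξ => h (rot (-(cbar / 2) * t) ξ)) (hmassrot _)) hφ hCT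
      have := abs_sub_abs_le_abs_sub (∫ z, φ z ∂(prodMeas h) - φ zext)
        (∫ z, φ z ∂(prodMeas fun ξ => h (rot (-(cbar / 2) * t) ξ)) - φ zext)
      calc (∫ z, φ z ∂(prodMeas h))
            - ∫ z, φ z ∂(prodMeas fun ξ => h (rot (-(cbar / 2) * t) ξ))
          ≤ |(∫ z, φ z ∂(prodMeas h)) - φ zext|
            + |(∫ z, φ z ∂(prodMeas fun ξ => h (rot (-(cbar / 2) * t) ξ))) - φ zext| := by
            have := abs_sub (∫ z, φ z ∂(prodMeas h) - φ zext)
              (∫ z, φ z ∂(prodMeas fun ξ => h (rot (-(cbar / 2) * t) ξ)) - φ zext)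
            have h3 := le_abs_self ((∫ z, φ z ∂(prodMeas h))
              - ∫ z, φ z ∂(prodMeas fun ξ => h (rot (-(cbar / 2) * t) ξ)))
            calc (∫ z, φ z ∂(prodMeas h))
                  - ∫ z, φ z ∂(prodMeas fun ξ => h (rot (-(cbar / 2) * t) ξ))
                = ((∫ z, φ z ∂(prodMeas h)) - φ zext)
                  - ((∫ z, φ z ∂(prodMeas fun ξ => h (rot (-(cbar / 2) * t) ξ))) - φ zext) := by
                  ring
              _ ≤ |((∫ z, φ z ∂(prodMeas h)) - φ zext)
                  - ((∫ z, φ z ∂(prodMeas fun ξ => h (rot (-(cbar / 2) * t) ξ))) - φ zext)| :=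
                  le_abs_self _
              _ ≤ _ := abs_sub _ _
        _ ≤ max CT 2 + max CT 2 := add_le_add hb1 hb2
        _ = 2 * max CT 2 := by ring
    exact le_csSup hbdd hmem
  refine ⟨fun t _ => hpart1 t, ?_⟩
  -- part 2
  have hmom' : 0 < ∫ ξ, ξ 1 * h ξ ∂sphMeas := hmom
  set A := ∫ ξ, ξ 0 * h ξ ∂sphMeas with hA
  set B := ∫ ξ, ξ 1 * h ξ ∂sphMeas with hBdef
  have hG : ∀ s : ℝ, ∫ ξ, (ξ 0 - rot s ξ 0) * h ξ ∂sphMeas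
      = (1 - Real.cos s) * A + Real.sin s * B := by
    intro s
    have : ∀ ξ : E3, (ξ 0 - rot s ξ 0) * h ξ
        = (1 - Real.cos s) * (ξ 0 * h ξ) + Real.sin s * (ξ 1 * h ξ) := by
      intro ξ
      simp only [rot_apply0]
      ring
    rw [integral_congr_ae (Filter.Eventually.of_forall this),
      integral_add (hInt0.const_mul _) (hInt1.const_mul _),
      integral_const_mul, integral_const_mul]
  set δ := min 1 (B / (2 * (|A| + 1))) with hδdef
  have hδpos : 0 < δ := by
    apply lt_min one_pos
    positivity
  have hkey : ∀ s : ℝ, 0 ≤ s → s ≤ δ → B / 4 * s ≤ (1 - Real.cos s) * A + Real.sin s * B := by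
    intro s hs hsδ
    have hs1 : s ≤ 1 := hsδ.trans (min_le_left _ _)
    have h4 : s ≤ B / (2 * (|A| + 1)) := hsδ.trans (min_le_right _ _)
    have h5 : s * (2 * (|A| + 1)) ≤ B := (le_div_iff₀ (by positivity)).1 h4
    exact trig_key A B hmom' s hs hs1 (by nlinarith)
  refine ⟨cbar * B / 8, by positivity, δ * (2 / cbar), by positivity, ?_⟩
  intro t ht
  obtain ⟨ht0, htT⟩ := ht
  have hsδ : cbar / 2 * t ≤ δ := by
    have h1 : cbar / 2 * t ≤ cbar / 2 * (δ * (2 / cbar)) :=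
      mul_le_mul_of_nonneg_left htT (by positivity)
    have h2 : cbar / 2 * (δ * (2 / cbar)) = δ := by field_simp
    linarith
  have h3 := hkey (cbar / 2 * t) (mul_nonneg (by positivity) ht0) hsδ
  have h4 := hpart1 t
  have h6 : (1 - Real.cos (cbar / 2 * t)) * A + Real.sin (cbar / 2 * t) * B
      ≤ W1 (prodMeas h) (prodMeas fun ξ => h (rot (-(cbar / 2) * t) ξ)) := by
    rw [sphInt_eq, hG] at h4
    exact h4
  calc cbar * B / 8 * t = B / 4 * (cbar / 2 * t) := by ring
    _ ≤ (1 - Real.cos (cbar / 2 * t)) * A + Real.sin (cbar / 2 * t) * B := h3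
    _ ≤ _ := h6
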